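/- Let λ be a binary partition of n ≥ 2 and define q_μ = P_1(μ)/z_μ for any binary partition μ (and, when λ has all parts even, write λ/2 for the binary partition (λ_1/2, λ_2/2, …); set q_{λ/2} = 0 if λ has a part equal to 1). Then 2·q_λ = q_{λ/2} + Σ_{(λ¹,λ²)} q_{λ¹}·q_{λ²}, where the sum runs over all ordered pairs (λ¹, λ²) of nonempty binary partitions whose multiset union is λ, each distinct ordered pair of partitions counted exactly once. -/

import Mathlib

/-- `z_λ = ∏_i i^{m_i} · m_i!` for a partition with `m_i` parts equal to `i`,
presented as a multiset of parts. -/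
def partZ (M : Multiset ℕ) : ℕ :=
  M.prod * (M.dedup.map fun i => (M.count i).factorial).prod

/-- `P_k(λ) = ∏_{i=2}^{ℓ} (2(λ_i + ⋯ + λ_ℓ) - 1)^k` for a partition
`λ_1 ≥ λ_2 ≥ ⋯ ≥ λ_ℓ`, presented as a multiset of parts: the tail sums of the
decreasing arrangement are the prefix sums of the increasing arrangement. -/
def partP (k : ℕ) (M : Multiset ℕ) : ℕ :=
  ∏ j ∈ Finset.range ((M.sort (· ≤ ·)).length - 1),
    (2 * ((M.sort (· ≤ ·)).take (j + 1)).sum - 1) ^ k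


/-- `q_μ = P_1(μ)/z_μ` for a partition presented as a multiset of parts. -/
def qfun (M : Multiset ℕ) : ℚ := (partP 1 M : ℚ) / (partZ M : ℚ)

open Multiset

lemma sort_cons_max {m : ℕ} {A : Multiset ℕ} (h : ∀ x ∈ A, x ≤ m) :
    (m ::ₘ A).sort (· ≤ ·) = A.sort (· ≤ ·) ++ [m] := by
  apply List.Perm.eq_of_pairwise' (r := (· ≤ ·))
  rotate_right
  · rw [← Multiset.coe_eq_coe]
    show ((m ::ₘ A).sort (· ≤ ·) : Multiset ℕ) = (A.sort (· ≤ ·) : Multiset ℕ) + ([m] : Multiset ℕ)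
    rw [Multiset.sort_eq, Multiset.sort_eq]
    rw [add_comm]
    simp
  · exact Multiset.pairwise_sort _ _
  · rw [List.pairwise_append]
    refine ⟨Multiset.pairwise_sort _ _, by simp, ?_⟩
    intro a ha b hb
    rw [List.mem_singleton] at hb
    subst hb
    exact h a ((Multiset.mem_sort _).mp ha)

lemma partP_zero : partP 1 0 = 1 := by simp [partP]

lemma partP_singleton (m : ℕ) : partP 1 {m} = 1 := by
  simp [partP, Multiset.sort_singleton]

lemma partP_cons_max {m : ℕ} {A : Multiset ℕ} (hA : A ≠ 0) (h : ∀ x ∈ A, x ≤ m) :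
    partP 1 (m ::ₘ A) = (2 * A.sum - 1) * partP 1 A := by
  have hsort := sort_cons_max h
  simp only [partP, pow_one, hsort]
  set l := A.sort (· ≤ ·) with hl
  have hlen : l.length = Multiset.card A := Multiset.length_sort _
  have hne : l ≠ [] := by
    intro hcon
    apply hA
    rw [← Multiset.sort_eq A (· ≤ ·), ← hl, hcon]
    rfl
  have hlsum : l.sum = A.sum := by
    conv_rhs => rw [← Multiset.sort_eq A (· ≤ ·)]
    rfl
  have hpos : 0 < l.length := List.length_pos_iff.mpr hne
  have hlen2 : (l ++ [m]).length - 1 = l.length := by simp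
  rw [hlen2]
  have hstep : l.length = (l.length - 1) + 1 := (Nat.succ_pred_eq_of_pos hpos).symm
  rw [hstep, Finset.prod_range_succ, ← hstep]
  have htake : ∀ j ∈ Finset.range (l.length - 1),
      (2 * ((l ++ [m]).take (j + 1)).sum - 1) = (2 * (l.take (j + 1)).sum - 1) := by
    intro j hj
    rw [Finset.mem_range] at hj
    rw [List.take_append_of_le_length (by omega)]
  rw [Finset.prod_congr rfl htake]
  rw [List.take_append_of_le_length (le_refl _), List.take_length, hlsum, mul_comm]

lemma partZ_eq (M : Multiset ℕ) :
    partZ M = M.prod * ∏ i ∈ M.toFinset, (M.count i).factorial := by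
  rw [partZ, Finset.prod_eq_multiset_prod, Multiset.toFinset_val]

lemma partZ_zero : partZ 0 = 1 := by simp [partZ]

lemma partZ_cons (a : ℕ) (s : Multiset ℕ) :
    partZ (a ::ₘ s) = a * (s.count a + 1) * partZ s := by
  rw [partZ_eq, partZ_eq, Multiset.prod_cons, Multiset.toFinset_cons]
  by_cases ha : a ∈ s
  · have ha' : a ∈ s.toFinset := Multiset.mem_toFinset.mpr ha
    rw [Finset.insert_eq_self.mpr ha']
    rw [← Finset.mul_prod_erase _ _ ha']
    conv_rhs => rw [← Finset.mul_prod_erase _ (fun i => (s.count i).factorial) ha']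
    have hcongr : ∀ i ∈ s.toFinset.erase a,
        ((a ::ₘ s).count i).factorial = (s.count i).factorial := by
      intro i hi
      rw [Multiset.count_cons_of_ne (Finset.ne_of_mem_erase hi) ]
    rw [Finset.prod_congr rfl hcongr, Multiset.count_cons_self]
    rw [Nat.factorial_succ]
    ring
  · have ha' : a ∉ s.toFinset := fun h => ha (Multiset.mem_toFinset.mp h)
    rw [Finset.prod_insert ha']
    have hcongr : ∀ i ∈ s.toFinset,
        ((a ::ₘ s).count i).factorial = (s.count i).factorial := by
      intro i hi
      rw [Multiset.count_cons_of_ne]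
      intro h; exact ha' (h ▸ hi)
    rw [Finset.prod_congr rfl hcongr, Multiset.count_cons_self,
      Multiset.count_eq_zero_of_notMem ha]
    simp [Nat.factorial]
    ring

lemma partZ_pos {M : Multiset ℕ} (h : ∀ x ∈ M, 0 < x) : 0 < partZ M := by
  induction M using Multiset.induction_on with
  | empty => simp [partZ_zero]
  | cons a s ih =>
    rw [partZ_cons]
    have ha : 0 < a := h a (Multiset.mem_cons_self _ _)
    have hs : 0 < partZ s := ih fun x hx => h x (Multiset.mem_cons_of_mem hx)
    positivity

lemma partZ_map_two (N : Multiset ℕ) :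
    partZ (N.map (fun x => 2 * x)) = 2 ^ (Multiset.card N) * partZ N := by
  induction N using Multiset.induction_on with
  | empty => simp [partZ_zero]
  | cons a s ih =>
    have hinj : Function.Injective (fun x : ℕ => 2 * x) := fun x y h => by dsimp at h; omega
    rw [Multiset.map_cons, partZ_cons, partZ_cons, ih,
      Multiset.count_map_eq_count' _ _ hinj, Multiset.card_cons]
    ring

lemma exists_max {M : Multiset ℕ} (h : M ≠ 0) : ∃ m ∈ M, ∀ x ∈ M, x ≤ m := by
  induction M using Multiset.induction_on with
  | empty => exact absurd rfl h
  | cons a s ih =>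
    rcases eq_or_ne s 0 with rfl | hs
    · exact ⟨a, Multiset.mem_cons_self _ _, by simp⟩
    · obtain ⟨m, hm, hmax⟩ := ih hs
      rcases le_total a m with hc | hc
      · refine ⟨m, Multiset.mem_cons_of_mem hm, ?_⟩
        intro x hx
        rcases Multiset.mem_cons.mp hx with rfl | hx'
        · exact hc
        · exact hmax _ hx'
      · refine ⟨a, Multiset.mem_cons_self _ _, ?_⟩
        intro x hx
        rcases Multiset.mem_cons.mp hx with rfl | hx'
        · exact le_refl _
        · exact (hmax _ hx').trans hc

lemma one_le_sum {S : Multiset ℕ} (hS : S ≠ 0) (h : ∀ x ∈ S, 0 < x) : 1 ≤ S.sum := by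
  obtain ⟨a, ha⟩ := Multiset.exists_mem_of_ne_zero hS
  calc 1 ≤ a := h a ha
  _ ≤ S.sum := Multiset.single_le_sum (fun x _ => Nat.zero_le x) _ ha

def TT (M : Multiset ℕ) : ℕ :=
  ((M.antidiagonal).map
    (fun p => if p.1 ≠ 0 ∧ p.2 ≠ 0 then partP 1 p.1 * partP 1 p.2 else 0)).sum

lemma TT_singleton (a : ℕ) : TT {a} = 0 := by
  show TT (a ::ₘ 0) = 0
  rw [TT, Multiset.antidiagonal_cons, Multiset.antidiagonal_zero]
  simp

lemma sum_map_ite_snd (A : Multiset ℕ) (c : Multiset ℕ → ℕ) :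
    ((A.antidiagonal).map (fun p => if p.2 = 0 then c p.1 else 0)).sum = c A := by
  induction A using Multiset.induction_on generalizing c with
  | empty => simp [Multiset.antidiagonal_zero]
  | cons a s ih =>
    rw [Multiset.antidiagonal_cons, Multiset.map_add, Multiset.sum_add,
      Multiset.map_map, Multiset.map_map]
    have h1 : ((fun p : Multiset ℕ × Multiset ℕ => if p.2 = 0 then c p.1 else 0) ∘
        Prod.map id (a ::ₘ ·)) = fun _ => 0 := by
      funext p
      simp [Prod.map]
    have h2 : ((fun p : Multiset ℕ × Multiset ℕ => if p.2 = 0 then c p.1 else 0) ∘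
        Prod.map (a ::ₘ ·) id) = fun p : Multiset ℕ × Multiset ℕ =>
          if p.2 = 0 then c (a ::ₘ p.1) else 0 := by
      funext p
      simp [Prod.map]
    rw [h1, h2, ih (fun x => c (a ::ₘ x))]
    simp

lemma sum_map_ite_fst (A : Multiset ℕ) (c : Multiset ℕ → ℕ) :
    ((A.antidiagonal).map (fun p => if p.1 = 0 then c p.2 else 0)).sum = c A := by
  induction A using Multiset.induction_on generalizing c with
  | empty => simp [Multiset.antidiagonal_zero]
  | cons a s ih =>
    rw [Multiset.antidiagonal_cons, Multiset.map_add, Multiset.sum_add,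
      Multiset.map_map, Multiset.map_map]
    have h2 : ((fun p : Multiset ℕ × Multiset ℕ => if p.1 = 0 then c p.2 else 0) ∘
        Prod.map (a ::ₘ ·) id) = fun _ => 0 := by
      funext p
      simp [Prod.map]
    have h1 : ((fun p : Multiset ℕ × Multiset ℕ => if p.1 = 0 then c p.2 else 0) ∘
        Prod.map id (a ::ₘ ·)) = fun p : Multiset ℕ × Multiset ℕ =>
          if p.1 = 0 then c (a ::ₘ p.2) else 0 := by
      funext p
      simp [Prod.map]
    rw [h1, h2, ih (fun x => c (a ::ₘ x))]
    simp

lemma TT_cons {m : ℕ} {A : Multiset ℕ} (hA : A ≠ 0) (hpos : ∀ x ∈ A, 0 < x)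
    (hmax : ∀ x ∈ A, x ≤ m) :
    TT (m ::ₘ A) = 2 * partP 1 A + (2 * A.sum - 2) * TT A := by
  have hmem : ∀ p : Multiset ℕ × Multiset ℕ, p ∈ A.antidiagonal →
      p.1 + p.2 = A := fun p hp => (Multiset.mem_antidiagonal).mp hp
  rw [TT, Multiset.antidiagonal_cons, Multiset.map_add, Multiset.sum_add,
    Multiset.map_map, Multiset.map_map]
  have e1 : Multiset.map ((fun p : Multiset ℕ × Multiset ℕ =>
        if p.1 ≠ 0 ∧ p.2 ≠ 0 then partP 1 p.1 * partP 1 p.2 else 0) ∘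
        Prod.map id (m ::ₘ ·)) A.antidiagonal =
      Multiset.map (fun p : Multiset ℕ × Multiset ℕ =>
        (if p.2 = 0 then partP 1 A else 0) +
        (if p.1 ≠ 0 ∧ p.2 ≠ 0 then (2 * p.2.sum - 1) * (partP 1 p.1 * partP 1 p.2)
          else 0)) A.antidiagonal := by
    apply Multiset.map_congr rfl
    rintro ⟨p1, p2⟩ hp
    have hp' : p1 + p2 = A := hmem _ hp
    simp only [Function.comp_apply, Prod.map_apply, id_eq, ne_eq,
      Multiset.cons_ne_zero, not_false_eq_true, and_true]
    by_cases h2 : p2 = 0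
    · subst h2
      have h1 : p1 = A := by simpa using hp'
      subst h1
      simp [hA, partP_singleton]
    · have hsub : p2 ≤ A := hp' ▸ (Multiset.le_add_left _ _)
      have hcons : partP 1 (m ::ₘ p2) = (2 * p2.sum - 1) * partP 1 p2 :=
        partP_cons_max h2 (fun x hx => hmax x (Multiset.mem_of_le hsub hx))
      rw [if_neg h2, hcons]
      by_cases h1 : p1 = 0
      · rw [if_neg (by simp [h1]), if_neg (by simp [h1])]
      · rw [if_pos (by simpa using h1), if_pos (by simp [h1, h2])]
        ring
  have e2 : Multiset.map ((fun p : Multiset ℕ × Multiset ℕ =>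
        if p.1 ≠ 0 ∧ p.2 ≠ 0 then partP 1 p.1 * partP 1 p.2 else 0) ∘
        Prod.map (m ::ₘ ·) id) A.antidiagonal =
      Multiset.map (fun p : Multiset ℕ × Multiset ℕ =>
        (if p.1 = 0 then partP 1 A else 0) +
        (if p.1 ≠ 0 ∧ p.2 ≠ 0 then (2 * p.1.sum - 1) * (partP 1 p.1 * partP 1 p.2)
          else 0)) A.antidiagonal := by
    apply Multiset.map_congr rfl
    rintro ⟨p1, p2⟩ hp
    have hp' : p1 + p2 = A := hmem _ hp
    simp only [Function.comp_apply, Prod.map_apply, id_eq, ne_eq,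
      Multiset.cons_ne_zero, not_false_eq_true, true_and]
    by_cases h1 : p1 = 0
    · subst h1
      have h2 : p2 = A := by simpa using hp'
      subst h2
      simp [hA, partP_singleton]
    · have hsub : p1 ≤ A := hp' ▸ (Multiset.le_add_right _ _)
      have hcons : partP 1 (m ::ₘ p1) = (2 * p1.sum - 1) * partP 1 p1 :=
        partP_cons_max h1 (fun x hx => hmax x (Multiset.mem_of_le hsub hx))
      rw [if_neg h1, hcons]
      by_cases h2 : p2 = 0
      · rw [if_neg (by simp [h2]), if_neg (by simp [h2])]
      · rw [if_pos (by simpa using h2), if_pos (by simp [h1, h2])]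
        ring
  rw [e1, e2, ← Multiset.sum_map_add]
  have e3 : Multiset.map (fun p : Multiset ℕ × Multiset ℕ =>
      ((if p.2 = 0 then partP 1 A else 0) +
        (if p.1 ≠ 0 ∧ p.2 ≠ 0 then (2 * p.2.sum - 1) * (partP 1 p.1 * partP 1 p.2) else 0)) +
      ((if p.1 = 0 then partP 1 A else 0) +
        (if p.1 ≠ 0 ∧ p.2 ≠ 0 then (2 * p.1.sum - 1) * (partP 1 p.1 * partP 1 p.2) else 0)))
      A.antidiagonal =
    Multiset.map (fun p : Multiset ℕ × Multiset ℕ =>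
      (if p.2 = 0 then partP 1 A else 0) +
      ((if p.1 = 0 then partP 1 A else 0) +
        (2 * A.sum - 2) *
          (if p.1 ≠ 0 ∧ p.2 ≠ 0 then partP 1 p.1 * partP 1 p.2 else 0)))
      A.antidiagonal := by
    apply Multiset.map_congr rfl
    rintro ⟨p1, p2⟩ hp
    have hp' : p1 + p2 = A := hmem _ hp
    simp only
    by_cases h1 : p1 = 0
    · have h2 : p2 ≠ 0 := by rintro rfl; apply hA; rw [← hp', h1]; simp
      simp [h1, h2]
    · by_cases h2 : p2 = 0
      · simp [h1, h2]
      · simp only [h1, h2, if_false, if_neg h1, if_neg h2, ne_eq, not_false_eq_true,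
          and_self, if_true]
        have hs1 : 1 ≤ p1.sum := one_le_sum h1
          (fun x hx => hpos x (hp' ▸ Multiset.mem_of_le (Multiset.le_add_right _ _) hx))
        have hs2 : 1 ≤ p2.sum := one_le_sum h2
          (fun x hx => hpos x (hp' ▸ Multiset.mem_of_le (Multiset.le_add_left _ _) hx))
        have hsum12 : p1.sum + p2.sum = A.sum := by
          rw [← hp', Multiset.sum_add]
        have key : (2 * p2.sum - 1) + (2 * p1.sum - 1) = 2 * A.sum - 2 := by omega
        rw [← key]
        ring
  rw [e3, Multiset.sum_map_add]
  rw [sum_map_ite_snd A (fun _ => partP 1 A)]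
  rw [Multiset.sum_map_add]
  rw [sum_map_ite_fst A (fun _ => partP 1 A)]
  rw [Multiset.sum_map_mul_left]
  rw [← TT]
  ring

lemma count_antidiagonal_partZ (M : Multiset ℕ) : ∀ A B : Multiset ℕ, A + B = M →
    partZ A * partZ B * (M.antidiagonal.count (A, B)) = partZ M := by
  induction M using Multiset.induction_on with
  | empty =>
    intro A B h
    obtain ⟨hA, hB⟩ : A = 0 ∧ B = 0 := by
      constructor <;> [exact Multiset.le_zero.mp (h ▸ Multiset.le_add_right _ _);
        exact Multiset.le_zero.mp (h ▸ Multiset.le_add_left _ _)]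
    subst hA; subst hB
    simp [Multiset.antidiagonal_zero, partZ_zero]
  | cons a s ih =>
    intro A B hAB
    have inj1 : Function.Injective (Prod.map (id : Multiset ℕ → Multiset ℕ) (a ::ₘ ·)) := by
      rintro ⟨x1, x2⟩ ⟨y1, y2⟩ h
      simp only [Prod.map_apply, id_eq, Prod.mk.injEq] at h
      exact Prod.ext h.1 ((Multiset.cons_inj_right a).mp h.2)
    have inj2 : Function.Injective (Prod.map (a ::ₘ ·) (id : Multiset ℕ → Multiset ℕ)) := by
      rintro ⟨x1, x2⟩ ⟨y1, y2⟩ h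
      simp only [Prod.map_apply, id_eq, Prod.mk.injEq] at h
      exact Prod.ext ((Multiset.cons_inj_right a).mp h.1) h.2
    have hcount : A.count a + B.count a = s.count a + 1 := by
      have := congrArg (Multiset.count a) hAB
      simp only [Multiset.count_add, Multiset.count_cons_self] at this
      omega
    have hc1 : (Multiset.map (Prod.map id (a ::ₘ ·)) s.antidiagonal).count (A, B) =
        if a ∈ B then s.antidiagonal.count (A, B.erase a) else 0 := by
      by_cases hB : a ∈ B
      · have hrw : (A, B) = Prod.map id (a ::ₘ ·) (A, B.erase a) := by
          simp only [Prod.map_apply, id_eq]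
          rw [Multiset.cons_erase hB]
        rw [if_pos hB, hrw, Multiset.count_map_eq_count' _ _ inj1]
      · rw [if_neg hB, Multiset.count_eq_zero]
        intro hmem
        obtain ⟨p, _, hEq⟩ := Multiset.mem_map.mp hmem
        apply hB
        have : a ::ₘ p.2 = B := congrArg Prod.snd hEq
        rw [← this]
        exact Multiset.mem_cons_self _ _
    have hc2 : (Multiset.map (Prod.map (a ::ₘ ·) id) s.antidiagonal).count (A, B) =
        if a ∈ A then s.antidiagonal.count (A.erase a, B) else 0 := by
      by_cases hA : a ∈ A
      · have hrw : (A, B) = Prod.map (a ::ₘ ·) id (A.erase a, B) := by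
          simp only [Prod.map_apply, id_eq]
          rw [Multiset.cons_erase hA]
        rw [if_pos hA, hrw, Multiset.count_map_eq_count' _ _ inj2]
      · rw [if_neg hA, Multiset.count_eq_zero]
        intro hmem
        obtain ⟨p, _, hEq⟩ := Multiset.mem_map.mp hmem
        apply hA
        have : a ::ₘ p.1 = A := congrArg Prod.fst hEq
        rw [← this]
        exact Multiset.mem_cons_self _ _
    rw [Multiset.antidiagonal_cons, Multiset.count_add, hc1, hc2, partZ_cons]
    by_cases haA : a ∈ A <;> by_cases haB : a ∈ B
    · -- both
      have hs1 : A.erase a + B = s := by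
        have h' : a ::ₘ (A.erase a + B) = a ::ₘ s := by
          rw [← Multiset.cons_add, Multiset.cons_erase haA, hAB]
        exact (Multiset.cons_inj_right a).mp h'
      have hs2 : A + B.erase a = s := by
        have h' : a ::ₘ (A + B.erase a) = a ::ₘ s := by
          rw [add_comm A _, ← Multiset.cons_add, Multiset.cons_erase haB, add_comm, hAB]
        exact (Multiset.cons_inj_right a).mp h'
      have IH1 := ih _ _ hs1
      have IH2 := ih _ _ hs2
      have ecA : (A.erase a).count a + 1 = A.count a := by
        rw [Multiset.count_erase_self]
        have := Multiset.count_pos.mpr haA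
        omega
      have ecB : (B.erase a).count a + 1 = B.count a := by
        rw [Multiset.count_erase_self]
        have := Multiset.count_pos.mpr haB
        omega
      have zA : partZ A = a * A.count a * partZ (A.erase a) := by
        conv_lhs => rw [← Multiset.cons_erase haA, partZ_cons]
        rw [ecA]
      have zB : partZ B = a * B.count a * partZ (B.erase a) := by
        conv_lhs => rw [← Multiset.cons_erase haB, partZ_cons]
        rw [ecB]
      rw [if_pos haA, if_pos haB, mul_add]
      have t1 : partZ A * partZ B * s.antidiagonal.count (A, B.erase a) =
          a * B.count a * partZ s := by
        rw [zB, ← IH2]; ring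
      have t2 : partZ A * partZ B * s.antidiagonal.count (A.erase a, B) =
          a * A.count a * partZ s := by
        rw [zA, ← IH1]; ring
      rw [t1, t2, ← hcount]
      ring
    · -- a ∈ A only
      have hs1 : A.erase a + B = s := by
        have h' : a ::ₘ (A.erase a + B) = a ::ₘ s := by
          rw [← Multiset.cons_add, Multiset.cons_erase haA, hAB]
        exact (Multiset.cons_inj_right a).mp h'
      have IH1 := ih _ _ hs1
      have ecA : (A.erase a).count a + 1 = A.count a := by
        rw [Multiset.count_erase_self]
        have := Multiset.count_pos.mpr haA
        omega
      have zA : partZ A = a * A.count a * partZ (A.erase a) := by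
        conv_lhs => rw [← Multiset.cons_erase haA, partZ_cons]
        rw [ecA]
      have hB0 : B.count a = 0 := Multiset.count_eq_zero_of_notMem haB
      rw [if_pos haA, if_neg haB, mul_add]
      have t2 : partZ A * partZ B * s.antidiagonal.count (A.erase a, B) =
          a * A.count a * partZ s := by
        rw [zA, ← IH1]; ring
      rw [t2, ← hcount, hB0]
      ring
    · -- a ∈ B only
      have hs2 : A + B.erase a = s := by
        have h' : a ::ₘ (A + B.erase a) = a ::ₘ s := by
          rw [add_comm A _, ← Multiset.cons_add, Multiset.cons_erase haB, add_comm, hAB]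
        exact (Multiset.cons_inj_right a).mp h'
      have IH2 := ih _ _ hs2
      have ecB : (B.erase a).count a + 1 = B.count a := by
        rw [Multiset.count_erase_self]
        have := Multiset.count_pos.mpr haB
        omega
      have zB : partZ B = a * B.count a * partZ (B.erase a) := by
        conv_lhs => rw [← Multiset.cons_erase haB, partZ_cons]
        rw [ecB]
      have hA0 : A.count a = 0 := Multiset.count_eq_zero_of_notMem haA
      rw [if_neg haA, if_pos haB, mul_add]
      have t1 : partZ A * partZ B * s.antidiagonal.count (A, B.erase a) =
          a * B.count a * partZ s := by
        rw [zB, ← IH2]; ring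
      rw [t1, ← hcount, hA0]
      ring
    · exfalso
      have : a ∈ A + B := hAB ▸ Multiset.mem_cons_self a s
      rcases Multiset.mem_add.mp this with h | h
      exacts [haA h, haB h]

lemma sum_map_two_mul (S : Multiset ℕ) : (S.map (fun x => 2 * x)).sum = 2 * S.sum := by
  induction S using Multiset.induction_on with
  | empty => simp
  | cons a s ih => simp [ih]; ring

lemma main_rec : ∀ (N : ℕ) (M : Multiset ℕ), Multiset.card M ≤ N →
    (∀ p ∈ M, ∃ i : ℕ, p = 2 ^ i) → 2 ≤ M.sum →
    2 * partP 1 M =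
      (if (1 : ℕ) ∈ M then 0 else 2 ^ (Multiset.card M) * partP 1 (M.map (· / 2))) + TT M := by
  intro N
  induction N with
  | zero =>
    intro M hcard _ hsum
    interval_cases h : Multiset.card M
    rw [Multiset.card_eq_zero] at h
    subst h
    simp at hsum
  | succ N ihN =>
    intro M hcard hbin hsum
    have hpos : ∀ x ∈ M, 0 < x := by
      intro x hx
      obtain ⟨i, rfl⟩ := hbin x hx
      positivity
    have hM0 : M ≠ 0 := by
      rintro rfl
      simp at hsum
    obtain ⟨m, hmM, hmax⟩ := exists_max hM0
    set A := M.erase m with hAdef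
    have hMA : M = m ::ₘ A := (Multiset.cons_erase hmM).symm
    have hmaxA : ∀ x ∈ A, x ≤ m := fun x hx => hmax x (Multiset.mem_of_mem_erase hx)
    have hposA : ∀ x ∈ A, 0 < x := fun x hx => hpos x (Multiset.mem_of_mem_erase hx)
    have hbinA : ∀ p ∈ A, ∃ i : ℕ, p = 2 ^ i := fun p hp => hbin p (Multiset.mem_of_mem_erase hp)
    by_cases hA : A = 0
    · -- M = {m}
      rw [hMA, hA]
      have hm2 : 2 ≤ m := by
        rw [hMA, hA] at hsum
        simpa using hsum
      have h1 : (1 : ℕ) ∉ (m ::ₘ (0 : Multiset ℕ)) := by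
        simp
        omega
      rw [if_neg h1]
      have e0 : TT (m ::ₘ (0 : Multiset ℕ)) = 0 := TT_singleton m
      have e1 : partP 1 (m ::ₘ (0 : Multiset ℕ)) = 1 := partP_singleton m
      have e2 : partP 1 (Multiset.map (· / 2) (m ::ₘ (0 : Multiset ℕ))) = 1 := by
        rw [Multiset.map_cons, Multiset.map_zero]
        exact partP_singleton (m / 2)
      rw [e0, e1, e2]
      simp
    · have hcardM : Multiset.card M = Multiset.card A + 1 := by rw [hMA]; simp
      have hcardA : Multiset.card A ≤ N := by omega
      have hn1 : 1 ≤ A.sum := one_le_sum hA hposA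
      have PC : partP 1 M = (2 * A.sum - 1) * partP 1 A := by
        rw [hMA]; exact partP_cons_max hA hmaxA
      have TC : TT M = 2 * partP 1 A + (2 * A.sum - 2) * TT A := by
        rw [hMA]; exact TT_cons hA hposA hmaxA
      by_cases hn2 : 2 ≤ A.sum
      · have IH := ihN A hcardA hbinA hn2
        by_cases h1M : (1 : ℕ) ∈ M
        · have h1A : (1 : ℕ) ∈ A := by
            rcases Multiset.mem_cons.mp (hMA ▸ h1M) with h | h
            · obtain ⟨a, ha⟩ := Multiset.exists_mem_of_ne_zero hA
              have h1 := hmaxA a ha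
              have h2 := hposA a ha
              have : a = 1 := by omega
              rwa [← this]
            · exact h
          rw [if_pos h1M]
          rw [if_pos h1A] at IH
          rw [PC, TC]
          have hTA : TT A = 2 * partP 1 A := by omega
          rw [hTA]
          obtain ⟨k, hk⟩ : ∃ k, A.sum = k + 1 := ⟨A.sum - 1, by omega⟩
          rw [hk]
          have r1 : 2 * (k + 1) - 1 = 2 * k + 1 := by omega
          have r2 : 2 * (k + 1) - 2 = 2 * k := by omega
          rw [r1, r2]
          ring
        · have h1A : (1 : ℕ) ∉ A := fun h => h1M (hMA ▸ Multiset.mem_cons_of_mem h)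
          rw [if_neg h1M]
          rw [if_neg h1A] at IH
          have hevenA : ∀ x ∈ A, 2 ∣ x := by
            intro x hx
            obtain ⟨i, rfl⟩ := hbinA x hx
            cases i with
            | zero => exact absurd hx (by simpa using h1A)
            | succ j => exact ⟨2 ^ j, by ring⟩
          have hA2 : A = (A.map (· / 2)).map (fun x => 2 * x) := by
            rw [Multiset.map_map]
            have hcg : ∀ x ∈ A, ((fun x => 2 * x) ∘ (· / 2)) x = id x := by
              intro x hx
              simp [Nat.mul_div_cancel' (hevenA x hx)]
            rw [Multiset.map_congr rfl hcg, Multiset.map_id]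
          have hsumA2 : A.sum = 2 * (A.map (· / 2)).sum := by
            conv_lhs => rw [hA2]
            exact sum_map_two_mul _
          have hmapA0 : A.map (· / 2) ≠ 0 := by simpa using hA
          have hmmax : ∀ x ∈ A.map (· / 2), x ≤ m / 2 := by
            intro x hx
            obtain ⟨y, hy, rfl⟩ := Multiset.mem_map.mp hx
            exact Nat.div_le_div_right (hmaxA y hy)
          obtain ⟨u, hu⟩ : ∃ u, (A.map (· / 2)).sum = u + 1 := ⟨(A.map (· / 2)).sum - 1, by omega⟩
          have PhalfM : partP 1 (M.map (· / 2)) = (2 * u + 1) * partP 1 (A.map (· / 2)) := by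
            rw [hMA, Multiset.map_cons]
            rw [partP_cons_max hmapA0 hmmax, hu]
            have : 2 * (u + 1) - 1 = 2 * u + 1 := by omega
            rw [this]
          have hsA : A.sum = 2 * u + 2 := by omega
          rw [PC, TC, PhalfM, hcardM, hsA]
          have r1 : 2 * (2 * u + 2) - 1 = 4 * u + 3 := by omega
          have r3 : 2 * (2 * u + 2) - 2 = 4 * u + 2 := by omega
          rw [r1, r3, pow_succ]
          zify at IH ⊢
          linear_combination (4 * (u : ℤ) + 2) * IH
      · have hs1 : A.sum = 1 := by omega
        obtain ⟨a, ha⟩ := Multiset.exists_mem_of_ne_zero hA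
        have ha1 : a = 1 := by
          have h1 := hposA a ha
          have h2 := Multiset.single_le_sum (fun x (_ : x ∈ A) => Nat.zero_le x) a ha
          omega
        have hAe : A = {1} := by
          have hc : A = a ::ₘ A.erase a := (Multiset.cons_erase ha).symm
          have hsum' : a + (A.erase a).sum = 1 := by
            rw [← hs1]
            conv_rhs => rw [hc, Multiset.sum_cons]
          have her : A.erase a = 0 := by
            by_contra hne
            have := one_le_sum hne (fun x hx => hposA x (Multiset.mem_of_mem_erase hx))
            omega
          rw [hc, her, ha1]
          rfl
        have h1M : (1 : ℕ) ∈ M := by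
          rw [hMA, hAe]
          exact Multiset.mem_cons_of_mem (Multiset.mem_singleton_self 1)
        rw [if_pos h1M, PC, TC, hAe]
        have e1 : ({1} : Multiset ℕ).sum = 1 := by simp
        have e2 : partP 1 ({1} : Multiset ℕ) = 1 := partP_singleton 1
        have e3 : TT ({1} : Multiset ℕ) = 0 := TT_singleton 1
        rw [e1, e2, e3]

/-- **Equation (5)**: for a binary partition `λ` of `n ≥ 2`,
`2 q_λ = q_{λ/2} + Σ_{λ¹ ∪ λ² = λ} q_{λ¹} q_{λ²}`, where `q_{λ/2} = 0` if `λ` has a part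
equal to `1` and otherwise `λ/2 = (λ_1/2, λ_2/2, …)`, and the sum runs over all ordered
pairs `(λ¹, λ²)` of nonempty partitions whose multiset union is `λ` (each distinct
ordered pair counted once). -/
theorem q_recurrence (n : ℕ) (hn : 2 ≤ n) (lam : n.Partition)
    (hlam : ∀ p ∈ lam.parts, ∃ i : ℕ, p = 2 ^ i) :
    2 * qfun lam.parts =
      (if (1 : ℕ) ∈ lam.parts then 0 else qfun (lam.parts.map (· / 2))) +
        ∑ᶠ (p : Multiset ℕ × Multiset ℕ)
            (_ : p.1 + p.2 = lam.parts ∧ p.1 ≠ 0 ∧ p.2 ≠ 0),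
          qfun p.1 * qfun p.2 := by
  classical
  set M := lam.parts with hMdef
  have hpos : ∀ x ∈ M, 0 < x := fun x hx => lam.parts_pos hx
  have h2 : 2 ≤ M.sum := by rw [lam.parts_sum]; exact hn
  have key := main_rec (Multiset.card M) M le_rfl hlam h2
  have hzpos : 0 < partZ M := partZ_pos hpos
  have hzQ : (partZ M : ℚ) ≠ 0 := by
    exact_mod_cast hzpos.ne'
  have hfin : (∑ᶠ (p : Multiset ℕ × Multiset ℕ)
        (_ : p.1 + p.2 = M ∧ p.1 ≠ 0 ∧ p.2 ≠ 0), qfun p.1 * qfun p.2)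
      = ∑ p ∈ (M.antidiagonal.toFinset.filter fun p => p.1 ≠ 0 ∧ p.2 ≠ 0),
          qfun p.1 * qfun p.2 := by
    apply finsum_cond_eq_sum_of_cond_iff
    intro p _
    simp only [Finset.mem_filter, Multiset.mem_toFinset, Multiset.mem_antidiagonal]
  rw [hfin]
  have hsum_eq : (∑ p ∈ (M.antidiagonal.toFinset.filter fun p => p.1 ≠ 0 ∧ p.2 ≠ 0),
      qfun p.1 * qfun p.2) = (TT M : ℚ) / partZ M := by
    rw [eq_div_iff hzQ, Finset.sum_mul, Finset.sum_filter]
    have hTT : (TT M : ℚ) = ∑ p ∈ M.antidiagonal.toFinset,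
        (M.antidiagonal.count p : ℚ) *
          (if p.1 ≠ 0 ∧ p.2 ≠ 0 then (partP 1 p.1 : ℚ) * partP 1 p.2 else 0) := by
      rw [TT, Finset.sum_multiset_map_count]
      push_cast
      apply Finset.sum_congr rfl
      intro p _
      rw [smul_eq_mul]
      push_cast [apply_ite (Nat.cast : ℕ → ℚ)]
      rfl
    rw [hTT]
    apply Finset.sum_congr rfl
    intro p hp
    have hpm : p.1 + p.2 = M := Multiset.mem_antidiagonal.mp (Multiset.mem_toFinset.mp hp)
    by_cases hc : p.1 ≠ 0 ∧ p.2 ≠ 0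
    · rw [if_pos hc, if_pos hc]
      have hz12 := count_antidiagonal_partZ M p.1 p.2 hpm
      have hz1 : (partZ p.1 : ℚ) ≠ 0 := by
        have : 0 < partZ p.1 := partZ_pos (fun x hx => hpos x
          (hpm ▸ Multiset.mem_of_le (Multiset.le_add_right _ _) hx))
        exact_mod_cast this.ne'
      have hz2 : (partZ p.2 : ℚ) ≠ 0 := by
        have : 0 < partZ p.2 := partZ_pos (fun x hx => hpos x
          (hpm ▸ Multiset.mem_of_le (Multiset.le_add_left _ _) hx))
        exact_mod_cast this.ne'
      have hz12' : (partZ p.1 : ℚ) * partZ p.2 * (M.antidiagonal.count p : ℚ) = partZ M := by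
        exact_mod_cast congrArg (Nat.cast : ℕ → ℚ) hz12
      rw [qfun, qfun, ← hz12']
      field_simp
    · rw [if_neg hc, if_neg hc, mul_zero]
  rw [hsum_eq]
  have lhs_eq : 2 * qfun M = ((2 * partP 1 M : ℕ) : ℚ) / partZ M := by
    rw [qfun]
    push_cast
    ring
  rw [lhs_eq, key]
  by_cases h1 : (1 : ℕ) ∈ M
  · rw [if_pos h1, if_pos h1]
    push_cast
    ring
  · rw [if_neg h1, if_neg h1]
    have heven : ∀ x ∈ M, 2 ∣ x := by
      intro x hx
      obtain ⟨i, rfl⟩ := hlam x hx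
      cases i with
      | zero => exact absurd hx (by simpa using h1)
      | succ j => exact ⟨2 ^ j, by ring⟩
    have hMg : M = (M.map (· / 2)).map (fun x => 2 * x) := by
      rw [Multiset.map_map]
      have hcg : ∀ x ∈ M, ((fun x => 2 * x) ∘ (· / 2)) x = id x := by
        intro x hx
        simp [Nat.mul_div_cancel' (heven x hx)]
      rw [Multiset.map_congr rfl hcg, Multiset.map_id]
    have hzz : partZ M = 2 ^ (Multiset.card M) * partZ (M.map (· / 2)) := by
      conv_lhs => rw [hMg]
      rw [partZ_map_two, Multiset.card_map]
    have hzh : 0 < partZ (M.map (· / 2)) := by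
      apply partZ_pos
      intro y hy
      obtain ⟨x, hx, rfl⟩ := Multiset.mem_map.mp hy
      obtain ⟨i, rfl⟩ := hlam x hx
      have hi : i ≠ 0 := by
        rintro rfl
        exact h1 (by simpa using hx)
      have : 2 ^ 1 ≤ 2 ^ i := Nat.pow_le_pow_right (by norm_num) (by omega)
      exact Nat.div_pos (by simpa using this) (by norm_num)
    have hzhQ : (partZ (M.map (· / 2)) : ℚ) ≠ 0 := by
      exact_mod_cast hzh.ne'
    rw [qfun]
    push_cast
    rw [hzz]
    push_cast
    rw [add_div]
    congr 1
    rw [mul_div_mul_left]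
    positivity
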